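/- Let s ≠ 0 and y be rationals. Let R : ℕ → ℚ be defined by R(0) = s, R(1) = y, R(n+1) = (2y/s)·R(n) − R(n−1), and let R* : ℕ → ℚ be defined by R*(0) = 1, R*(1) = 2y/s, R*(n+1) = (2y/s)·R*(n) − R*(n−1). Then for every integer n ≥ 2, R(n)·R(n−1) − (y² − s²)·R*(n−1)·R*(n−2) = s·y. -/

import Mathlib

theorem stmt_14 (s y : ℚ) (hs : s ≠ 0)
    (R : ℕ → ℚ) (hR0 : R 0 = s) (hR1 : R 1 = y)
    (hRrec : ∀ n : ℕ, R (n + 2) = (2 * y / s) * R (n + 1) - R n)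
    (Rstar : ℕ → ℚ) (hRs0 : Rstar 0 = 1) (hRs1 : Rstar 1 = 2 * y / s)
    (hRsrec : ∀ n : ℕ, Rstar (n + 2) = (2 * y / s) * Rstar (n + 1) - Rstar n) :
    ∀ n : ℕ, 2 ≤ n →
      R n * R (n - 1) - (y ^ 2 - s ^ 2) * Rstar (n - 1) * Rstar (n - 2) = s * y := by
  -- Lemma A: R(n+2) = y·Rstar(n+1) − s·Rstar(n)
  have hA : ∀ n : ℕ, R (n + 2) = y * Rstar (n + 1) - s * Rstar n := by
    have key : ∀ n : ℕ, R (n + 2) = y * Rstar (n + 1) - s * Rstar n ∧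
        R (n + 3) = y * Rstar (n + 2) - s * Rstar (n + 1) := by
      intro n
      induction n with
      | zero =>
        constructor
        · rw [hRrec 0, hRs1, hRs0, hR1, hR0]; field_simp
        · rw [hRrec 1, hRrec 0, hRsrec 0, hRs1, hRs0, hR1, hR0]; field_simp; ring
      | succ k ih =>
        refine ⟨ih.2, ?_⟩
        have h4 : R (k + 4) = (2 * y / s) * R (k + 3) - R (k + 2) := hRrec (k + 2)
        have hs3 : Rstar (k + 3) = (2 * y / s) * Rstar (k + 2) - Rstar (k + 1) :=
          hRsrec (k + 1)
        rw [show k + 1 + 3 = k + 4 from rfl, h4, ih.1, ih.2,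
          show k + 1 + 2 = k + 3 from rfl, hs3]
        linear_combination s * hRsrec k
    exact fun n => (key n).1
  -- Cassini-type identity for Rstar
  have hC : ∀ n : ℕ, Rstar (n + 2) * Rstar n - Rstar (n + 1) ^ 2 = -1 := by
    intro n
    induction n with
    | zero => rw [hRsrec 0, hRs1, hRs0]; ring
    | succ k ih =>
      have h3 : Rstar (k + 3) = (2 * y / s) * Rstar (k + 2) - Rstar (k + 1) :=
        hRsrec (k + 1)
      have h2 : Rstar (k + 2) = (2 * y / s) * Rstar (k + 1) - Rstar k :=
        hRsrec k
      rw [show k + 1 + 2 = k + 3 from rfl, h3, show k + 1 + 1 = k + 2 from rfl]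
      linear_combination ih - Rstar (k + 2) * h2
  intro n hn
  obtain ⟨m, rfl⟩ : ∃ m, n = m + 2 := ⟨n - 2, by omega⟩
  simp only [show m + 2 - 1 = m + 1 from rfl, show m + 2 - 2 = m from rfl]
  match m with
  | 0 =>
    rw [hA 0, hRs1, hRs0, hR1]
    field_simp
    ring
  | k + 1 =>
    have h1 : R (k + 3) = y * Rstar (k + 2) - s * Rstar (k + 1) := hA (k + 1)
    have h2 : R (k + 2) = y * Rstar (k + 1) - s * Rstar k := hA k
    have h3 : Rstar (k + 2) * Rstar k = Rstar (k + 1) ^ 2 - 1 := by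
      have := hC k; linarith
    have h4 : Rstar (k + 2) = (2 * y / s) * Rstar (k + 1) - Rstar k := hRsrec k
    have h5 : s * (Rstar (k + 2) + Rstar k) = 2 * y * Rstar (k + 1) := by
      rw [h4]; field_simp; ring
    rw [show k + 1 + 2 = k + 3 from rfl, h1, h2, show k + 1 + 1 = k + 2 from rfl]
    linear_combination (-y * s) * h3 + s * Rstar (k + 1) * h5
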